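/- Let X and Y be Polish spaces, P = μ ⊗ ν a product probability measure on X × Y, and let A, B ⊆ X × Y be Borel sets with P(A) = 1 and P(B) > 0. Then there exist Borel sets X₀ ⊆ X, Y₀ ⊆ Y with μ(X₀) = ν(Y₀) = 1, and a point (x*, y*) ∈ B ∩ (X₀ × Y₀), such that for every (x, y) ∈ X₀ × Y₀ both (x, y*) and (x*, y) lie in A ∩ (X₀ × Y₀). -/

import Mathlib

open MeasureTheory Set

/-- Hub-point lemma: if P = μ ⊗ ν, P(A) = 1 and P(B) > 0, then there are full-measure
Borel sets X₀, Y₀ and a point (x*, y*) ∈ B ∩ (X₀ × Y₀) such that every (x, y) ∈ X₀ × Y₀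
satisfies (x, y*) ∈ A ∩ (X₀ × Y₀) and (x*, y) ∈ A ∩ (X₀ × Y₀). -/
theorem hub_point_lemma
    {X Y : Type*} [MetricSpace X] [TopologicalSpace.SeparableSpace X] [CompleteSpace X]
    [MeasurableSpace X] [BorelSpace X]
    [MetricSpace Y] [TopologicalSpace.SeparableSpace Y] [CompleteSpace Y]
    [MeasurableSpace Y] [BorelSpace Y]
    (μ : Measure X) [IsProbabilityMeasure μ] (ν : Measure Y) [IsProbabilityMeasure ν]
    (A B : Set (X × Y)) (hAm : MeasurableSet A) (hBm : MeasurableSet B)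
    (hA : μ.prod ν A = 1) (hB : 0 < μ.prod ν B) :
    ∃ (X₀ : Set X) (Y₀ : Set Y), MeasurableSet X₀ ∧ MeasurableSet Y₀ ∧
      μ X₀ = 1 ∧ ν Y₀ = 1 ∧
      ∃ p : X × Y, p ∈ B ∩ X₀ ×ˢ Y₀ ∧
        ∀ x ∈ X₀, ∀ y ∈ Y₀,
          (x, p.2) ∈ A ∩ X₀ ×ˢ Y₀ ∧ (p.1, y) ∈ A ∩ X₀ ×ˢ Y₀ := by
  have hAc : μ.prod ν Aᶜ = 0 := by
    rw [prob_compl_eq_zero_iff hAm]; exact hA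
  -- X₁ : set of x with full x-section of A
  set X₁ : Set X := {x | ν (Prod.mk x ⁻¹' A) = 1} with hX₁def
  have hX₁m : MeasurableSet X₁ :=
    (measurable_measure_prodMk_left hAm) (measurableSet_singleton 1)
  have hX₁ : μ X₁ = 1 := by
    have h1 : ∀ᵐ x ∂μ, ν (Prod.mk x ⁻¹' Aᶜ) = 0 :=
      Measure.measure_ae_null_of_prod_null hAc
    have h2 : ∀ᵐ x ∂μ, x ∈ X₁ := by
      filter_upwards [h1] with x hx
      have he : Prod.mk x ⁻¹' Aᶜ = (Prod.mk x ⁻¹' A)ᶜ := rfl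
      rw [he, prob_compl_eq_zero_iff (measurable_prodMk_left hAm)] at hx
      exact hx
    rw [← prob_compl_eq_zero_iff hX₁m]
    exact ae_iff.mp h2
  -- Y₁ : set of y with full y-section of A
  set Y₁ : Set Y := {y | μ ((fun x => (x, y)) ⁻¹' A) = 1} with hY₁def
  have hY₁m : MeasurableSet Y₁ :=
    (measurable_measure_prodMk_right hAm) (measurableSet_singleton 1)
  have hY₁ : ν Y₁ = 1 := by
    have hswap : ν.prod μ (Prod.swap ⁻¹' Aᶜ) = 0 := by
      rw [← Measure.prod_swap,
        Measure.map_apply measurable_swap (hAm.compl.preimage measurable_swap)]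
      convert hAc using 2
      ext ⟨a, b⟩
      simp
    have h1 : ∀ᵐ y ∂ν, μ (Prod.mk y ⁻¹' (Prod.swap ⁻¹' Aᶜ)) = 0 :=
      Measure.measure_ae_null_of_prod_null hswap
    have h2 : ∀ᵐ y ∂ν, y ∈ Y₁ := by
      filter_upwards [h1] with y hy
      have hsm : MeasurableSet ((fun x => (x, y)) ⁻¹' A) :=
        hAm.preimage measurable_prodMk_right
      have he : Prod.mk y ⁻¹' (Prod.swap ⁻¹' Aᶜ) = ((fun x => (x, y)) ⁻¹' A)ᶜ := rfl
      rw [he, prob_compl_eq_zero_iff hsm] at hy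
      exact hy
    rw [← prob_compl_eq_zero_iff hY₁m]
    exact ae_iff.mp h2
  -- the set where we pick the hub point
  have hSm : MeasurableSet (A ∩ X₁ ×ˢ Y₁) := hAm.inter (hX₁m.prod hY₁m)
  have hfull : μ.prod ν (A ∩ X₁ ×ˢ Y₁) = 1 := by
    rw [← prob_compl_eq_zero_iff hSm, Set.compl_inter]
    refine measure_union_null hAc ?_
    rw [prob_compl_eq_zero_iff (hX₁m.prod hY₁m), Measure.prod_prod, hX₁, hY₁, one_mul]
  have hC : 0 < μ.prod ν (B ∩ (A ∩ X₁ ×ˢ Y₁)) := by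
    have hnull : μ.prod ν (B \ (A ∩ X₁ ×ˢ Y₁)) = 0 := by
      have hsub : B \ (A ∩ X₁ ×ˢ Y₁) ⊆ (A ∩ X₁ ×ˢ Y₁)ᶜ := fun z hz => hz.2
      refine measure_mono_null hsub ?_
      rw [prob_compl_eq_zero_iff hSm]; exact hfull
    have hle : μ.prod ν B ≤ μ.prod ν (B ∩ (A ∩ X₁ ×ˢ Y₁)) := by
      calc μ.prod ν B ≤ μ.prod ν (B ∩ (A ∩ X₁ ×ˢ Y₁)) + μ.prod ν (B \ (A ∩ X₁ ×ˢ Y₁)) :=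
            measure_le_inter_add_diff _ _ _
        _ = μ.prod ν (B ∩ (A ∩ X₁ ×ˢ Y₁)) := by rw [hnull, add_zero]
    exact lt_of_lt_of_le hB hle
  obtain ⟨p, hpB, hpA, hpX₁, hpY₁⟩ := nonempty_of_measure_ne_zero hC.ne'
  have hm2 : MeasurableSet {x | (x, p.2) ∈ A} := hAm.preimage measurable_prodMk_right
  have hm3 : MeasurableSet {y | (p.1, y) ∈ A} := hAm.preimage measurable_prodMk_left
  refine ⟨X₁ ∩ {x | (x, p.2) ∈ A}, Y₁ ∩ {y | (p.1, y) ∈ A},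
    hX₁m.inter hm2, hY₁m.inter hm3, ?_, ?_, ?_⟩
  · rw [← prob_compl_eq_zero_iff (hX₁m.inter hm2), Set.compl_inter]
    refine measure_union_null ?_ ?_
    · rw [prob_compl_eq_zero_iff hX₁m]; exact hX₁
    · rw [prob_compl_eq_zero_iff hm2]; exact hpY₁
  · rw [← prob_compl_eq_zero_iff (hY₁m.inter hm3), Set.compl_inter]
    refine measure_union_null ?_ ?_
    · rw [prob_compl_eq_zero_iff hY₁m]; exact hY₁
    · rw [prob_compl_eq_zero_iff hm3]; exact hpX₁
  · refine ⟨p, ⟨hpB, ⟨hpX₁, hpA⟩, ⟨hpY₁, hpA⟩⟩, ?_⟩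
    rintro x ⟨hxX₁, hxA⟩ y ⟨hyY₁, hyA⟩
    exact ⟨⟨hxA, ⟨hxX₁, hxA⟩, ⟨hpY₁, hpA⟩⟩, ⟨hyA, ⟨hpX₁, hpA⟩, ⟨hyY₁, hyA⟩⟩⟩
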